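/- Let n ≥ 5 and let Z : ZMod n → ℝ² be a family of points such that for every index i there exists an affine map f_i : ℝ² → ℝ with f_i (Z i) = 0, f_i (Z (i+1)) = 0, and f_i (Z j) > 0 for every j with j ≠ i and j ≠ i+1 (so the points Z i are, in cyclic order, the vertices of a strictly convex n-gon). Let P := convexHull ℝ (Set.range Z), and for each i let M_i denote the affine span of {Z i, Z (i+1)}. Then there is no line L = {p + t • v | t ∈ ℝ} in ℝ² (p, v ∈ ℝ², v ≠ 0) such that L meets the interior of P and, for every i, the intersection L ∩ M_i is nonempty and contained in P. -/

import Mathlib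

lemma aux3 (n : ℕ) (hn : 5 ≤ n) (a b c : ZMod n) (hab : a ≠ b) (hac : a ≠ c) (hbc : b ≠ c)
    (h1 : b = a + 1 ∨ a = b + 1) (h2 : c = a + 1 ∨ a = c + 1)
    (h3 : c = b + 1 ∨ b = c + 1) : False := by
  haveI : NeZero n := ⟨by omega⟩
  have h30 : ((3 : ℕ) : ZMod n) ≠ 0 := by
    intro h
    rw [ZMod.natCast_eq_zero_iff] at h
    exact absurd (Nat.le_of_dvd (by norm_num) h) (by omega)
  have h10 : ((1 : ℕ) : ZMod n) ≠ 0 := by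
    intro h
    rw [ZMod.natCast_eq_zero_iff] at h
    exact absurd (Nat.le_of_dvd (by norm_num) h) (by omega)
  push_cast at h30 h10
  rcases h1 with h1 | h1 <;> rcases h2 with h2 | h2 <;> rcases h3 with h3 | h3
  · exact hbc (h1.trans h2.symm)
  · exact hbc (h1.trans h2.symm)
  · exact h30 (by linear_combination -h1 - h2 - h3)
  · exact hab (h2.trans h3.symm)
  · exact h10 (by linear_combination -h1 - h2 + h3)
  · exact h30 (by linear_combination -h1 - h2 - h3)
  · exact hbc (by linear_combination h2 - h1)
  · exact hbc (by linear_combination h2 - h1)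

lemma seg_mem_aux (p v : Fin 2 → ℝ) (ti tj tq : ℝ)
    (h : (ti < tj ∧ tj < tq) ∨ (tq < tj ∧ tj < ti)) :
    p + tj • v ∈ openSegment ℝ (p + ti • v) (p + tq • v) := by
  have hne : tq - ti ≠ 0 := by
    rcases h with ⟨h1, h2⟩ | ⟨h1, h2⟩ <;> intro hc <;> linarith
  refine ⟨(tq - tj) / (tq - ti), (tj - ti) / (tq - ti), ?_, ?_, ?_, ?_⟩
  · rw [div_pos_iff]
    rcases h with ⟨h1, h2⟩ | ⟨h1, h2⟩
    · left; constructor <;> linarith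
    · right; constructor <;> linarith
  · rw [div_pos_iff]
    rcases h with ⟨h1, h2⟩ | ⟨h1, h2⟩
    · left; constructor <;> linarith
    · right; constructor <;> linarith
  · rw [← add_div, div_eq_one_iff_eq hne]; ring
  · have hexp : ∀ a b : ℝ, a • (p + ti • v) + b • (p + tq • v)
        = (a + b) • p + (a * ti + b * tq) • v := by
      intro a b
      rw [smul_add, smul_add, add_smul, add_smul, mul_smul, mul_smul]
      abel
    rw [hexp]
    have h1 : (tq - tj) / (tq - ti) + (tj - ti) / (tq - ti) = 1 := by
      rw [← add_div, div_eq_one_iff_eq hne]; ring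
    have h2 : (tq - tj) / (tq - ti) * ti + (tj - ti) / (tq - ti) * tq = tj := by
      field_simp
      ring
    rw [h1, h2, one_smul]

theorem stmt_16 (n : ℕ) (hn : 5 ≤ n) (Z : ZMod n → (Fin 2 → ℝ))
    (hconv : ∀ i : ZMod n, ∃ f : (Fin 2 → ℝ) →ᵃ[ℝ] ℝ,
      f (Z i) = 0 ∧ f (Z (i + 1)) = 0 ∧
      ∀ j : ZMod n, j ≠ i → j ≠ i + 1 → 0 < f (Z j)) :
    ¬ ∃ (p v : Fin 2 → ℝ), v ≠ 0 ∧
      ({x : Fin 2 → ℝ | ∃ t : ℝ, x = p + t • v} ∩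
          interior (convexHull ℝ (Set.range Z))).Nonempty ∧
      ∀ i : ZMod n,
        ({x : Fin 2 → ℝ | ∃ t : ℝ, x = p + t • v} ∩
            (affineSpan ℝ ({Z i, Z (i + 1)} : Set (Fin 2 → ℝ)) : Set (Fin 2 → ℝ))).Nonempty ∧
        {x : Fin 2 → ℝ | ∃ t : ℝ, x = p + t • v} ∩
            (affineSpan ℝ ({Z i, Z (i + 1)} : Set (Fin 2 → ℝ)) : Set (Fin 2 → ℝ)) ⊆
          convexHull ℝ (Set.range Z) := by
  haveI : NeZero n := ⟨by omega⟩
  rintro ⟨p, v, hv, ⟨q, hqL, hqI⟩, hM⟩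
  obtain ⟨tq, rfl⟩ := hqL
  set P : Set (Fin 2 → ℝ) := convexHull ℝ (Set.range Z) with hPdef
  choose f hf0 hf1 hfpos using hconv
  -- nonnegativity on the polytope
  have hfP : ∀ i : ZMod n, ∀ x ∈ P, 0 ≤ f i x := by
    intro i x hx
    have hc : Convex ℝ ((f i) ⁻¹' Set.Ici (0:ℝ)) := (convex_Ici (0:ℝ)).affine_preimage (f i)
    have hsub : P ⊆ (f i) ⁻¹' Set.Ici (0:ℝ) := by
      apply convexHull_min ?_ hc
      rintro _ ⟨j, rfl⟩
      by_cases hji : j = i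
      · simp [hji, hf0]
      · by_cases hji1 : j = i + 1
        · simp [hji1, hf1]
        · exact le_of_lt (hfpos i j hji hji1)
    exact hsub hx
  -- adjacency of vanishing indices
  have hadj : ∀ i j : ZMod n, i ≠ j → ∀ x ∈ P, f i x = 0 → f j x = 0 →
      j = i + 1 ∨ i = j + 1 := by
    intro i j hij x hx hfi hfj
    by_contra hcon
    push_neg at hcon
    obtain ⟨h1, h2⟩ := hcon
    have hg : ∀ k : ZMod n, 0 < f i (Z k) + f j (Z k) := by
      intro k
      by_cases hki : k = i
      · subst hki
        have : 0 < f j (Z k) := hfpos j k hij h2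
        have h0 := hf0 k
        linarith
      by_cases hki1 : k = i + 1
      · have : 0 < f j (Z k) := by
          apply hfpos j k
          · intro h; exact h1 (h.symm.trans hki1)
          · intro h
            rw [hki1] at h
            exact hij (by linear_combination h)
        have h0 := hf1 i
        rw [← hki1] at h0
        linarith
      · have := hfpos i k hki hki1
        have := hfP j (Z k) (subset_convexHull ℝ _ ⟨k, rfl⟩)
        linarith
    obtain ⟨k0, -, hk0⟩ :=
      Finset.exists_min_image Finset.univ (fun k => f i (Z k) + f j (Z k))
        ⟨i, Finset.mem_univ i⟩
    have hc : Convex ℝ {y : Fin 2 → ℝ | f i (Z k0) + f j (Z k0) ≤ f i y + f j y} := by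
      have he : {y : Fin 2 → ℝ | f i (Z k0) + f j (Z k0) ≤ f i y + f j y}
          = (f i + f j) ⁻¹' Set.Ici (f i (Z k0) + f j (Z k0)) := by
        ext y
        simp [AffineMap.coe_add, Pi.add_apply]
      rw [he]
      exact (convex_Ici _).affine_preimage _
    have hsub : P ⊆ {y : Fin 2 → ℝ | f i (Z k0) + f j (Z k0) ≤ f i y + f j y} := by
      apply convexHull_min ?_ hc
      rintro _ ⟨k, rfl⟩
      exact hk0 k (Finset.mem_univ k)
    have h3 := hsub hx
    simp only [Set.mem_setOf_eq, hfi, hfj] at h3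
    have := hg k0
    linarith
  -- strict positivity on the interior
  have hint : ∀ i : ZMod n, ∀ x ∈ interior P, 0 < f i x := by
    intro i x hx
    have hxP : x ∈ P := interior_subset hx
    rcases lt_or_eq_of_le (hfP i x hxP) with h | h
    · exact h
    exfalso
    have hk : 0 < f i (Z (i + 2)) := by
      apply hfpos i (i + 2)
      · intro h
        have h2 : ((2:ℕ) : ZMod n) = 0 := by push_cast; linear_combination h
        rw [ZMod.natCast_eq_zero_iff] at h2
        exact absurd (Nat.le_of_dvd (by norm_num) h2) (by omega)
      · intro h
        have h2 : ((1:ℕ) : ZMod n) = 0 := by push_cast; linear_combination h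
        rw [ZMod.natCast_eq_zero_iff] at h2
        exact absurd (Nat.le_of_dvd (by norm_num) h2) (by omega)
    set u : Fin 2 → ℝ := Z i - Z (i + 2) with hu
    have hlin : (f i).linear u = - f i (Z (i + 2)) := by
      have hl := (f i).linearMap_vsub (Z i) (Z (i + 2))
      simp only [vsub_eq_sub] at hl
      rw [hu, hl, hf0]
      ring
    obtain ⟨ε, hε, hball⟩ := Metric.isOpen_iff.1 isOpen_interior x hx
    set δ : ℝ := ε / (2 * (‖u‖ + 1)) with hδ
    have hδpos : 0 < δ := by positivity
    have hmem : x + δ • u ∈ P := by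
      apply interior_subset
      apply hball
      rw [Metric.mem_ball, dist_eq_norm]
      have he : x + δ • u - x = δ • u := by module
      rw [he, norm_smul, Real.norm_eq_abs, abs_of_pos hδpos]
      calc δ * ‖u‖ ≤ δ * (‖u‖ + 1) := by nlinarith [norm_nonneg u]
        _ = ε / 2 := by rw [hδ]; field_simp
        _ < ε := by linarith
    have hval : f i (x + δ • u) = δ * (f i).linear u + f i x := by
      have he : x + δ • u = (δ • u) +ᵥ x := by
        simp only [vadd_eq_add]; abel
      rw [he, AffineMap.map_vadd]
      simp [vadd_eq_add, map_smul, smul_eq_mul]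
    have hge := hfP i (x + δ • u) hmem
    rw [hval, hlin, ← h] at hge
    nlinarith
  -- f i vanishes on the affine span of the edge
  have hspan : ∀ i : ZMod n,
      ∀ x ∈ (affineSpan ℝ ({Z i, Z (i + 1)} : Set (Fin 2 → ℝ)) : Set (Fin 2 → ℝ)),
      f i x = 0 := by
    intro i x hx
    have hx' : (x - Z i) +ᵥ Z i ∈ affineSpan ℝ ({Z i, Z (i + 1)} : Set (Fin 2 → ℝ)) := by
      simpa [vadd_eq_add, sub_add_cancel] using hx
    rw [vadd_left_mem_affineSpan_pair] at hx'
    obtain ⟨r, hr⟩ := hx'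
    have hxeq : x = (r • (Z (i + 1) -ᵥ Z i)) +ᵥ Z i := by
      simp only [vadd_eq_add, vsub_eq_sub] at hr ⊢
      rw [hr]; abel
    rw [hxeq, AffineMap.map_vadd, map_smul, (f i).linearMap_vsub]
    simp [hf0, hf1, vsub_eq_sub, vadd_eq_add, smul_eq_mul]
  -- choose the intersection points
  choose x hxL hxA using fun i => (hM i).1
  choose t hxt using hxL
  have hxP : ∀ i, x i ∈ P := fun i => (hM i).2 ⟨⟨t i, hxt i⟩, hxA i⟩
  have hfx : ∀ i, f i (x i) = 0 := fun i => hspan i _ (hxA i)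
  have hqP : (p + tq • v) ∈ interior P := hqI
  -- each t i differs from tq
  have htne : ∀ i, t i ≠ tq := by
    intro i h
    have hx0 := hfx i
    rw [hxt i, h] at hx0
    exact absurd hx0 (ne_of_gt (hint i _ hqP))
  -- no t j strictly between t i and tq
  have hseg : ∀ i j : ZMod n, (t i < t j ∧ t j < tq) ∨ (tq < t j ∧ t j < t i) → False := by
    intro i j h
    have hmem : x j ∈ openSegment ℝ (x i) (p + tq • v) := by
      rw [hxt i, hxt j]
      exact seg_mem_aux p v (t i) (t j) tq h
    have hintmem : x j ∈ interior P :=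
      (convex_convexHull ℝ _).openSegment_self_interior_subset_interior (hxP i) hqP hmem
    exact absurd (hfx j) (ne_of_gt (hint j _ hintmem))
  have hL : ∀ i j : ZMod n, t i < tq → t j < tq → t i = t j := by
    intro i j hi hj
    by_contra hne
    rcases lt_or_gt_of_ne hne with h | h
    · exact hseg i j (Or.inl ⟨h, hj⟩)
    · exact hseg j i (Or.inl ⟨h, hi⟩)
  have hR : ∀ i j : ZMod n, tq < t i → tq < t j → t i = t j := by
    intro i j hi hj
    by_contra hne
    rcases lt_or_gt_of_ne hne with h | h
    · exact hseg j i (Or.inr ⟨hi, h⟩)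
    · exact hseg i j (Or.inr ⟨hj, h⟩)
  classical
  set S1 : Finset (ZMod n) := Finset.univ.filter (fun i => t i < tq) with hS1def
  set S2 : Finset (ZMod n) := Finset.univ.filter (fun i => tq < t i) with hS2def
  have hS1 : S1.card ≤ 2 := by
    by_contra hgt
    push_neg at hgt
    obtain ⟨a, b, c, hma, hmb, hmc, hab, hac, hbc⟩ := Finset.two_lt_card_iff.1 hgt
    rw [hS1def, Finset.mem_filter] at hma hmb hmc
    have hba : x b = x a := by rw [hxt a, hxt b, hL b a hmb.2 hma.2]
    have hca : x c = x a := by rw [hxt a, hxt c, hL c a hmc.2 hma.2]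
    exact aux3 n hn a b c hab hac hbc
      (hadj a b hab (x a) (hxP a) (hfx a) (by rw [← hba]; exact hfx b))
      (hadj a c hac (x a) (hxP a) (hfx a) (by rw [← hca]; exact hfx c))
      (hadj b c hbc (x a) (hxP a) (by rw [← hba]; exact hfx b)
        (by rw [← hca]; exact hfx c))
  have hS2 : S2.card ≤ 2 := by
    by_contra hgt
    push_neg at hgt
    obtain ⟨a, b, c, hma, hmb, hmc, hab, hac, hbc⟩ := Finset.two_lt_card_iff.1 hgt
    rw [hS2def, Finset.mem_filter] at hma hmb hmc
    have hba : x b = x a := by rw [hxt a, hxt b, hR b a hmb.2 hma.2]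
    have hca : x c = x a := by rw [hxt a, hxt c, hR c a hmc.2 hma.2]
    exact aux3 n hn a b c hab hac hbc
      (hadj a b hab (x a) (hxP a) (hfx a) (by rw [← hba]; exact hfx b))
      (hadj a c hac (x a) (hxP a) (hfx a) (by rw [← hca]; exact hfx c))
      (hadj b c hbc (x a) (hxP a) (by rw [← hba]; exact hfx b)
        (by rw [← hca]; exact hfx c))
  have hcover : (Finset.univ : Finset (ZMod n)) ⊆ S1 ∪ S2 := by
    intro i _
    rcases lt_or_gt_of_ne (htne i) with h | h
    · exact Finset.mem_union_left _ (by rw [hS1def, Finset.mem_filter]; exact ⟨Finset.mem_univ i, h⟩)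
    · exact Finset.mem_union_right _ (by rw [hS2def, Finset.mem_filter]; exact ⟨Finset.mem_univ i, h⟩)
  have hcard := Finset.card_le_card hcover
  have hcardu : (Finset.univ : Finset (ZMod n)).card = n := by
    rw [Finset.card_univ, ZMod.card]
  have hcardun := Finset.card_union_le S1 S2
  omega
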